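/- Let h : ℝ^n → ℝ be differentiable with L_h-Lipschitz gradient (L_h > 0), g : ℝ^n → ℝ convex, P : ℝ^n → ℝ ∪ {∞} proper closed with inf P > −∞, and F := h + P − g. Let L_max ≥ L_min > 0, τ > 1, c > 0 and define ñ := max{⌈(log(L_h + c) − log L_min)/log τ⌉, 1}. Then for any x̄ ∈ dom P, any convex subgradient ζ ∈ ∂g(x̄), and any L⁰ ∈ [L_min, L_max], one has τ^ñ L⁰ ≥ L_h + c, and there exists j ∈ {0, 1, …, ñ} such that every global minimizer u of x ↦ ⟨∇h(x̄) − ζ, x − x̄⟩ + (τ^j L⁰/2)‖x − x̄‖² + P(x) satisfies F(u) ≤ F(x̄) − (c/2)‖u − x̄‖². In particular, the line-search criterion in the NPG method with majorization is satisfied after at most ñ inner iterations, and the accepted parameter is bounded by τ^ñ L_max. -/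

import Mathlib

open Filter Topology

open InnerProductSpace

lemma descent_lemma {n : ℕ}
    (h : EuclideanSpace ℝ (Fin n) → ℝ)
    (h' : EuclideanSpace ℝ (Fin n) → EuclideanSpace ℝ (Fin n))
    (Lh : ℝ) (hLh : 0 ≤ Lh)
    (hgrad : ∀ x, HasGradientAt h (h' x) x)
    (hlip : LipschitzWith (Real.toNNReal Lh) h')
    (x y : EuclideanSpace ℝ (Fin n)) :
    h y ≤ h x + inner ℝ (h' x) (y - x) + Lh / 2 * ‖y - x‖ ^ 2 := by
  set v := y - x with hv
  set ψ : ℝ → ℝ := fun t => h (x + t • v) - t * inner ℝ (h' x) v - Lh / 2 * t ^ 2 * ‖v‖ ^ 2 with hψ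
  have hderiv : ∀ t : ℝ, HasDerivAt ψ
      ((inner ℝ (h' (x + t • v)) v : ℝ) - inner ℝ (h' x) v - Lh * t * ‖v‖ ^ 2) t := by
    intro t
    have hline : HasDerivAt (fun t : ℝ => x + t • v) v t := by
      simpa using ((hasDerivAt_id t).smul_const v).const_add x
    have hcomp : HasDerivAt (fun t : ℝ => h (x + t • v))
        ((inner ℝ (h' (x + t • v)) v : ℝ)) t := by
      have := (hgrad (x + t • v)).hasFDerivAt.comp_hasDerivAt t hline
      exact this
    have h2 : HasDerivAt (fun t : ℝ => t * (inner ℝ (h' x) v : ℝ)) (inner ℝ (h' x) v : ℝ) t := by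
      simpa using (hasDerivAt_id t).mul_const (inner ℝ (h' x) v : ℝ)
    have h3 : HasDerivAt (fun t : ℝ => Lh / 2 * t ^ 2 * ‖v‖ ^ 2) (Lh * t * ‖v‖ ^ 2) t := by
      have := ((hasDerivAt_pow 2 t).const_mul (Lh / 2)).mul_const (‖v‖ ^ 2)
      refine this.congr_deriv ?_
      rw [show (2:ℕ) - 1 = 1 from rfl]
      push_cast
      ring
    exact (hcomp.sub h2).sub h3
  have hanti : AntitoneOn ψ (Set.Icc 0 1) := by
    apply antitoneOn_of_deriv_nonpos (convex_Icc 0 1)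
    · exact fun t _ => (hderiv t).differentiableAt.continuousAt.continuousWithinAt
    · intro t ht
      exact ((hderiv t).differentiableAt).differentiableWithinAt
    · intro t ht
      rw [interior_Icc] at ht
      rw [(hderiv t).deriv]
      have hCS : (inner ℝ (h' (x + t • v)) v : ℝ) - inner ℝ (h' x) v ≤ Lh * t * ‖v‖ ^ 2 := by
        have h1 : (inner ℝ (h' (x + t • v)) v : ℝ) - inner ℝ (h' x) v
            = inner ℝ (h' (x + t • v) - h' x) v := by rw [inner_sub_left]
        rw [h1]
        calc (inner ℝ (h' (x + t • v) - h' x) v : ℝ)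
            ≤ ‖h' (x + t • v) - h' x‖ * ‖v‖ := real_inner_le_norm _ _
          _ ≤ (Lh * (t * ‖v‖)) * ‖v‖ := by
              apply mul_le_mul_of_nonneg_right _ (norm_nonneg v)
              have := hlip.dist_le_mul (x + t • v) x
              rw [dist_eq_norm] at this
              simpa [Real.coe_toNNReal _ hLh, dist_eq_norm, norm_smul,
                abs_of_nonneg ht.1.le] using this
          _ = Lh * t * ‖v‖ ^ 2 := by ring
      linarith
  have := hanti (Set.left_mem_Icc.2 zero_le_one) (Set.right_mem_Icc.2 zero_le_one) zero_le_one
  simp only [hψ] at this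
  simp only [zero_smul, add_zero, one_smul, zero_mul, zero_pow, mul_zero, sub_zero, one_pow,
    one_mul, mul_one] at this
  have hy : x + v = y := by rw [hv]; abel
  rw [hy] at this
  linarith


/-- Finite termination of the NPG line search with majorization.  With
`ñ := max{⌈(log(L_h + c) − log L_min)/log τ⌉, 1}` one has `τ^ñ L⁰ ≥ L_h + c`,
and there is `j ∈ {0,…,ñ}` such that every global minimizer `u` of
`x ↦ ⟨∇h(x̄) − ζ, x − x̄⟩ + (τ^j L⁰/2)‖x − x̄‖² + P(x)` satisfies
`F(u) ≤ F(x̄) − (c/2)‖u − x̄‖²`; the accepted parameter is at most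
`τ^ñ L_max`. -/
theorem npg_major_linesearch_finite {n : ℕ}
    (h : EuclideanSpace ℝ (Fin n) → ℝ)
    (h' : EuclideanSpace ℝ (Fin n) → EuclideanSpace ℝ (Fin n))
    (Lh : ℝ) (hLh : 0 < Lh)
    (hgrad : ∀ x, HasGradientAt h (h' x) x)
    (hlip : LipschitzWith (Real.toNNReal Lh) h')
    (g : EuclideanSpace ℝ (Fin n) → ℝ) (hg : ConvexOn ℝ Set.univ g)
    (P : EuclideanSpace ℝ (Fin n) → EReal)
    (hPproper : ∃ x, P x ≠ ⊤) (hPbot : ∀ x, P x ≠ ⊥)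
    (hPclosed : LowerSemicontinuous P)
    (hPbdd : ∃ b : ℝ, ∀ x, (b : EReal) ≤ P x)
    (Lmin Lmax : ℝ) (hLmin : 0 < Lmin) (hLminmax : Lmin ≤ Lmax)
    (τ : ℝ) (hτ : 1 < τ) (c : ℝ) (hc : 0 < c)
    (ntilde : ℤ)
    (hntilde : ntilde = max (⌈(Real.log (Lh + c) - Real.log Lmin) / Real.log τ⌉) 1)
    (xbar : EuclideanSpace ℝ (Fin n)) (hxbar : P xbar ≠ ⊤)
    (ζ : EuclideanSpace ℝ (Fin n))
    (hζ : ∀ y, g xbar + inner ℝ ζ (y - xbar) ≤ g y)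
    (L0 : ℝ) (hL0 : Lmin ≤ L0 ∧ L0 ≤ Lmax) :
    τ ^ ntilde * L0 ≥ Lh + c ∧
    ∃ j : ℕ, (j : ℤ) ≤ ntilde ∧ τ ^ j * L0 ≤ τ ^ ntilde * Lmax ∧
      ∀ u : EuclideanSpace ℝ (Fin n),
        (∀ x, ((inner ℝ (h' xbar - ζ) (u - xbar) + (τ ^ j * L0 / 2) * ‖u - xbar‖ ^ 2 : ℝ) : EReal)
              + P u ≤
            ((inner ℝ (h' xbar - ζ) (x - xbar) + (τ ^ j * L0 / 2) * ‖x - xbar‖ ^ 2 : ℝ) : EReal)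
              + P x) →
        (h u : EReal) + P u - (g u : ℝ) ≤
          (h xbar : EReal) + P xbar - (g xbar : ℝ) -
            (((c / 2) * ‖u - xbar‖ ^ 2 : ℝ) : EReal) := by
  have hτ0 : (0:ℝ) < τ := by linarith
  have hlogτ : 0 < Real.log τ := Real.log_pos hτ
  have hn1 : (1:ℤ) ≤ ntilde := by rw [hntilde]; exact le_max_right _ _
  have hn0 : (0:ℤ) ≤ ntilde := by linarith
  -- first part
  have hmain : Lh + c ≤ τ ^ ntilde * Lmin := by
    have hq : (Real.log (Lh + c) - Real.log Lmin) / Real.log τ ≤ (ntilde : ℝ) := by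
      calc (Real.log (Lh + c) - Real.log Lmin) / Real.log τ
          ≤ (⌈(Real.log (Lh + c) - Real.log Lmin) / Real.log τ⌉ : ℝ) := Int.le_ceil _
        _ ≤ (ntilde : ℝ) := by
            exact_mod_cast (hntilde ▸ le_max_left _ _ : _ ≤ ntilde)
    have h1 : Real.log (Lh + c) - Real.log Lmin ≤ (ntilde : ℝ) * Real.log τ := by
      rw [div_le_iff₀ hlogτ] at hq; linarith
    have hpos : (0:ℝ) < τ ^ ntilde * Lmin := by positivity
    have hLhc : (0:ℝ) < Lh + c := by linarith
    rw [← Real.log_le_log_iff hLhc hpos, Real.log_mul (by positivity) (ne_of_gt hLmin),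
      Real.log_zpow]
    linarith
  have hfirst : Lh + c ≤ τ ^ ntilde * L0 := by
    calc Lh + c ≤ τ ^ ntilde * Lmin := hmain
      _ ≤ τ ^ ntilde * L0 := by
          apply mul_le_mul_of_nonneg_left hL0.1 (by positivity)
  refine ⟨hfirst, ntilde.toNat, ?_, ?_, ?_⟩
  · simp [Int.toNat_of_nonneg hn0]
  · have : τ ^ ntilde.toNat = τ ^ ntilde := by
      rw [← zpow_natCast, Int.toNat_of_nonneg hn0]
    rw [this]
    exact mul_le_mul_of_nonneg_left hL0.2 (by positivity)
  · intro u hmin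
    set v := u - xbar with hv
    set L : ℝ := τ ^ ntilde.toNat * L0 with hLdef
    have hLge : Lh + c ≤ L := by
      have : τ ^ ntilde.toNat = τ ^ ntilde := by
        rw [← zpow_natCast, Int.toNat_of_nonneg hn0]
      rw [hLdef, this]; exact hfirst
    -- evaluate minimality at xbar
    have hx0 := hmin xbar
    simp only [sub_self, inner_zero_right, norm_zero] at hx0
    -- P xbar real
    obtain ⟨pb, hpb⟩ : ∃ r : ℝ, P xbar = (r : EReal) := by
      lift P xbar to ℝ using ⟨hxbar, hPbot xbar⟩ with r
      exact ⟨r, rfl⟩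
    have hx0' : ((inner ℝ (h' xbar - ζ) v + L / 2 * ‖v‖ ^ 2 : ℝ) : EReal) + P u ≤ (pb : EReal) := by
      rw [hpb] at hx0
      simpa using hx0
    -- P u real
    have hPu_ne_top : P u ≠ ⊤ := by
      intro htop
      rw [htop, EReal.coe_add_top] at hx0'
      exact absurd hx0' (by simp)
    obtain ⟨pu, hpu⟩ : ∃ r : ℝ, P u = (r : EReal) := by
      lift P u to ℝ using ⟨hPu_ne_top, hPbot u⟩ with r
      exact ⟨r, rfl⟩
    rw [hpu] at hx0'
    have hreal : (inner ℝ (h' xbar - ζ) v : ℝ) + L / 2 * ‖v‖ ^ 2 + pu ≤ pb := by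
      rw [← EReal.coe_add] at hx0'
      exact_mod_cast hx0'
    -- descent
    have hdesc := descent_lemma h h' Lh hLh.le hgrad hlip xbar u
    have hsub := hζ u
    have hinner : (inner ℝ (h' xbar - ζ) v : ℝ) = inner ℝ (h' xbar) v - inner ℝ ζ v :=
      inner_sub_left _ _ _
    have hfin : h u + pu - g u ≤ h xbar + pb - g xbar - c / 2 * ‖v‖ ^ 2 := by
      nlinarith [sq_nonneg ‖v‖, hLge]
    rw [hpu, hpb]
    rw [show (h u : EReal) + (pu : EReal) - (g u : ℝ) = ((h u + pu - g u : ℝ) : EReal) by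
      norm_cast]
    rw [show (h xbar : EReal) + (pb : EReal) - (g xbar : ℝ) - ((c / 2 * ‖u - xbar‖ ^ 2 : ℝ) : EReal)
        = ((h xbar + pb - g xbar - c / 2 * ‖u - xbar‖ ^ 2 : ℝ) : EReal) by norm_cast]
    exact_mod_cast hfin
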